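/- arXiv:1504.01265 — 5 statements merged into one kernel-verified Lean document; each statement's English description precedes it below -/
import Mathlib

section
/- Let k = 2, q ≥ 3, 1 ≤ m ≤ ⌊q/2⌋, and θ > θ_m = 1 + 2√(m(q-m)) with θ ≠ q+1. Setting x_1 = (θ-1-√((θ-1)²-4m(q-m)))/(2m) and x_2 = (θ-1+√((θ-1)²-4m(q-m)))/(2m), the numbers h_i = 2 ln x_i for i = 1,2 are nonzero fixed points of f_m, i.e., f_m(h_i) = h_i. -/
lemma fix_aux (θ A B : ℝ) (hθ : 1 < θ) (x : ℝ) (hx : 0 < x)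
    (hquad : A * x ^ 2 + B = (θ - 1) * x) (hne : θ ≠ A + B + 1) :
    2 * Real.log (((θ + A - 1) * Real.exp (2 * Real.log x) + B) /
      (A * Real.exp (2 * Real.log x) + B - 1 + θ)) = 2 * Real.log x ∧
      2 * Real.log x ≠ 0 := by
  have hE : Real.exp (2 * Real.log x) = x ^ 2 := by
    rw [show (2 : ℝ) * Real.log x = Real.log (x ^ 2) by
      rw [Real.log_pow]; push_cast; ring]
    exact Real.exp_log (by positivity)
  have hden : A * x ^ 2 + B - 1 + θ = (θ - 1) * (x + 1) := by
    linear_combination hquad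
  have hdenpos : 0 < A * x ^ 2 + B - 1 + θ := by
    rw [hden]; have h1 : 0 < θ - 1 := by linarith
    have h2 : 0 < x + 1 := by linarith
    positivity
  have harg : ((θ + A - 1) * x ^ 2 + B) / (A * x ^ 2 + B - 1 + θ) = x := by
    rw [div_eq_iff (ne_of_gt hdenpos)]
    linear_combination (1 - x) * hquad
  constructor
  · rw [hE, harg]
  · intro h0
    have hlog : Real.log x = 0 := by linarith
    have hx1 : x = 1 := by
      rcases Real.log_eq_zero.mp hlog with h | h | h <;> linarith
    apply hne
    rw [hx1] at hquad
    linarith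

set_option maxHeartbeats 2000000 in
/-- For k = 2, q ≥ 3, 1 ≤ m ≤ ⌊q/2⌋, θ > θ_m = 1+2√(m(q-m)), θ ≠ q+1:
with x_i given by the quadratic formula, h_i = 2 ln x_i are nonzero fixed
points of f_m. -/
theorem hi_nonzero_fixed (θ : ℝ) (q m : ℕ) (hq : 3 ≤ q) (hm : 1 ≤ m)
    (hm2 : m ≤ q / 2)
    (hθm : 1 + 2 * Real.sqrt ((m : ℝ) * ((q : ℝ) - m)) < θ)
    (hθc : θ ≠ (q : ℝ) + 1) :
    let x₁ : ℝ := (θ - 1 - Real.sqrt ((θ - 1) ^ 2 - 4 * m * ((q : ℝ) - m))) / (2 * m)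
    let x₂ : ℝ := (θ - 1 + Real.sqrt ((θ - 1) ^ 2 - 4 * m * ((q : ℝ) - m))) / (2 * m)
    let f : ℝ → ℝ := fun h =>
      2 * Real.log (((θ + m - 1) * Real.exp h + ((q : ℝ) - m)) /
        ((m : ℝ) * Real.exp h + (q : ℝ) - m - 1 + θ))
    f (2 * Real.log x₁) = 2 * Real.log x₁ ∧ 2 * Real.log x₁ ≠ 0 ∧
    f (2 * Real.log x₂) = 2 * Real.log x₂ ∧ 2 * Real.log x₂ ≠ 0 := by
  intro x₁ x₂ f
  have hmq : 2 * m ≤ q := by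
    calc 2 * m ≤ 2 * (q / 2) := by omega
    _ ≤ q := Nat.mul_div_le q 2
  have hm1 : (1 : ℝ) ≤ (m : ℝ) := by exact_mod_cast hm
  have hqm : (1 : ℝ) ≤ (q : ℝ) - m := by
    have h : m ≤ q - m := by omega
    have h2 := (Nat.cast_le (α := ℝ)).mpr h
    rw [Nat.cast_sub (by omega)] at h2
    linarith
  have hs : (0 : ℝ) ≤ (m : ℝ) * ((q : ℝ) - m) := by nlinarith
  have hsq : Real.sqrt ((m : ℝ) * ((q : ℝ) - m)) ^ 2 = (m : ℝ) * ((q : ℝ) - m) :=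
    Real.sq_sqrt hs
  have hsqnn : 0 ≤ Real.sqrt ((m : ℝ) * ((q : ℝ) - m)) := Real.sqrt_nonneg _
  have hsqpos : 0 < Real.sqrt ((m : ℝ) * ((q : ℝ) - m)) := by
    apply Real.sqrt_pos.mpr; nlinarith
  have hθ1 : 1 < θ := by nlinarith
  have hDnn : (0 : ℝ) ≤ (θ - 1) ^ 2 - 4 * m * ((q : ℝ) - m) := by nlinarith
  set D : ℝ := Real.sqrt ((θ - 1) ^ 2 - 4 * m * ((q : ℝ) - m)) with hDdef
  have hD2 : D ^ 2 = (θ - 1) ^ 2 - 4 * m * ((q : ℝ) - m) := Real.sq_sqrt hDnn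
  have hDge : 0 ≤ D := Real.sqrt_nonneg _
  have hDlt : D < θ - 1 := by nlinarith
  have hmpos : (0 : ℝ) < m := by linarith
  have hx1pos : 0 < x₁ := by
    apply div_pos (by linarith) (by linarith)
  have hx2pos : 0 < x₂ := by
    apply div_pos (by linarith) (by linarith)
  have hne : θ ≠ (m : ℝ) + ((q : ℝ) - m) + 1 := by
    intro h; apply hθc; rw [h]; ring
  have hq1 : (m : ℝ) * x₁ ^ 2 + ((q : ℝ) - m) = (θ - 1) * x₁ := by
    show (m : ℝ) * ((θ - 1 - D) / (2 * m)) ^ 2 + ((q : ℝ) - m)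
      = (θ - 1) * ((θ - 1 - D) / (2 * m))
    field_simp
    nlinarith [hD2]
  have hq2 : (m : ℝ) * x₂ ^ 2 + ((q : ℝ) - m) = (θ - 1) * x₂ := by
    show (m : ℝ) * ((θ - 1 + D) / (2 * m)) ^ 2 + ((q : ℝ) - m)
      = (θ - 1) * ((θ - 1 + D) / (2 * m))
    field_simp
    nlinarith [hD2]
  have h1 := fix_aux θ (m : ℝ) ((q : ℝ) - m) hθ1 x₁ hx1pos hq1 hne
  have h2 := fix_aux θ (m : ℝ) ((q : ℝ) - m) hθ1 x₂ hx2pos hq2 hne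
  refine ⟨?_, h1.2, ?_, h2.2⟩
  · show 2 * Real.log (((θ + m - 1) * Real.exp (2 * Real.log x₁) + ((q : ℝ) - m)) /
      ((m : ℝ) * Real.exp (2 * Real.log x₁) + (q : ℝ) - m - 1 + θ)) = 2 * Real.log x₁
    rw [show (m : ℝ) * Real.exp (2 * Real.log x₁) + (q : ℝ) - m - 1 + θ
        = (m : ℝ) * Real.exp (2 * Real.log x₁) + ((q : ℝ) - m) - 1 + θ from by ring]
    exact h1.1
  · show 2 * Real.log (((θ + m - 1) * Real.exp (2 * Real.log x₂) + ((q : ℝ) - m)) /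
      ((m : ℝ) * Real.exp (2 * Real.log x₂) + (q : ℝ) - m - 1 + θ)) = 2 * Real.log x₂
    rw [show (m : ℝ) * Real.exp (2 * Real.log x₂) + (q : ℝ) - m - 1 + θ
        = (m : ℝ) * Real.exp (2 * Real.log x₂) + ((q : ℝ) - m) - 1 + θ from by ring]
    exact h2.1
end

section
/- For k = 2, θ > θ_m (with θ_m = 1+2√(m(q-m))), q ≥ 3, 1 ≤ m ≤ ⌊q/2⌋, any fixed point of f_m(h) = 2 ln(((θ+m-1)e^h+q-m)/(m e^h+q-m-1+θ)) is one of 0, h_1 = 2 ln x_1, or h_2 = 2 ln x_2, where x_{1,2} = (θ-1 ∓ √((θ-1)²-4m(q-m)))/(2m). -/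
/-- For k = 2, θ > θ_m, q ≥ 3, 1 ≤ m ≤ ⌊q/2⌋: any fixed point of f_m is one
of 0, h₁ = 2 ln x₁ or h₂ = 2 ln x₂. -/
theorem fixed_points_classified (θ : ℝ) (q m : ℕ) (hq : 3 ≤ q) (hm : 1 ≤ m)
    (hm2 : m ≤ q / 2)
    (hθm : 1 + 2 * Real.sqrt ((m : ℝ) * ((q : ℝ) - m)) < θ) (h : ℝ)
    (hfix : 2 * Real.log (((θ + m - 1) * Real.exp h + ((q : ℝ) - m)) /
      ((m : ℝ) * Real.exp h + (q : ℝ) - m - 1 + θ)) = h) :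
    h = 0 ∨
    h = 2 * Real.log ((θ - 1 - Real.sqrt ((θ - 1) ^ 2 - 4 * m * ((q : ℝ) - m))) / (2 * m)) ∨
    h = 2 * Real.log ((θ - 1 + Real.sqrt ((θ - 1) ^ 2 - 4 * m * ((q : ℝ) - m))) / (2 * m)) := by
  have hm0 : (0:ℝ) < m := by exact_mod_cast hm
  have h2m : (2:ℝ) * m ≤ q := by
    have h1 : m * 2 ≤ q := (Nat.le_div_iff_mul_le (by norm_num)).mp hm2
    have := (by exact_mod_cast h1 : (m:ℝ) * 2 ≤ q)
    linarith
  have hqm : (0:ℝ) < (q:ℝ) - m := by linarith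
  have hs0 : 0 ≤ Real.sqrt ((m:ℝ) * ((q:ℝ) - m)) := Real.sqrt_nonneg _
  have hθ1 : 1 < θ := by linarith
  set x := Real.exp (h/2) with hxdef
  have hx : 0 < x := Real.exp_pos _
  have hx2 : Real.exp h = x ^ 2 := by
    rw [hxdef, sq, ← Real.exp_add]; norm_num
  have hep := Real.exp_pos h
  have hden : 0 < (m:ℝ) * Real.exp h + (q:ℝ) - m - 1 + θ := by nlinarith
  have hnum : 0 < (θ + m - 1) * Real.exp h + ((q:ℝ) - m) := by nlinarith
  have hlogx : Real.log x = h / 2 := Real.log_exp _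
  have hR : ((θ + m - 1) * Real.exp h + ((q:ℝ) - m)) /
      ((m : ℝ) * Real.exp h + (q : ℝ) - m - 1 + θ) = x := by
    have hlog : Real.log (((θ + m - 1) * Real.exp h + ((q:ℝ) - m)) /
        ((m : ℝ) * Real.exp h + (q : ℝ) - m - 1 + θ)) = h / 2 := by linarith
    rw [← Real.exp_log (div_pos hnum hden), hlog]
  have hpoly : ((θ + m - 1) * Real.exp h + ((q:ℝ) - m)) =
      x * ((m:ℝ) * Real.exp h + (q:ℝ) - m - 1 + θ) := by
    rw [div_eq_iff (ne_of_gt hden)] at hR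
    linarith
  rw [hx2] at hpoly
  have key : (x - 1) * ((m:ℝ) * x^2 - (θ - 1) * x + ((q:ℝ) - m)) = 0 := by
    linear_combination -hpoly
  rcases mul_eq_zero.mp key with h1 | h2
  · left
    have hx1 : x = 1 := by linarith
    have : Real.log x = 0 := by rw [hx1, Real.log_one]
    linarith
  · -- quadratic case
    have hmc : 0 ≤ (m:ℝ) * ((q:ℝ) - m) := le_of_lt (mul_pos hm0 hqm)
    have hsq : Real.sqrt ((m:ℝ) * ((q:ℝ) - m)) ^ 2 = (m:ℝ) * ((q:ℝ) - m) :=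
      Real.sq_sqrt hmc
    have hD : 0 ≤ (θ - 1) ^ 2 - 4 * m * ((q:ℝ) - m) := by nlinarith
    set s := Real.sqrt ((θ - 1) ^ 2 - 4 * m * ((q:ℝ) - m)) with hsdef
    have hs2 : s ^ 2 = (θ - 1) ^ 2 - 4 * m * ((q:ℝ) - m) := Real.sq_sqrt hD
    have hfac : (2 * (m:ℝ) * x - (θ - 1 - s)) * (2 * (m:ℝ) * x - (θ - 1 + s)) = 0 := by
      linear_combination 4 * (m:ℝ) * h2 - hs2
    rcases mul_eq_zero.mp hfac with h3 | h3
    · right; left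
      have hxv : x = (θ - 1 - s) / (2 * m) := by field_simp; linarith
      rw [← hxv, hlogx]; ring
    · right; right
      have hxv : x = (θ - 1 + s) / (2 * m) := by field_simp; linarith
      rw [← hxv, hlogx]; ring
end

section
/- A real number h is a fixed point of f_m with k=2 if and only if x = e^{h/2} > 0 satisfies m x² - (θ-1) x + (q-m) = 0 or x = 1. Equivalently, substituting x = e^{h/2} reduces the fixed point equation h = 2 ln(((θ+m-1)x²+q-m)/(m x²+q-m-1+θ)) to (x-1)(m x² - (θ-1)x + q-m) = 0. -/
/-- For k = 2: h is a fixed point of f_m iff x = e^{h/2} satisfies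
m x² - (θ-1)x + (q-m) = 0 or x = 1, equivalently (x-1)(m x²-(θ-1)x+(q-m)) = 0. -/
theorem fixed_point_iff (θ : ℝ) (q m : ℕ) (hq : 3 ≤ q) (hm : 1 ≤ m)
    (hm2 : m ≤ q - 1) (hθ : 1 < θ) (h : ℝ) :
    (2 * Real.log (((θ + m - 1) * Real.exp h + ((q : ℝ) - m)) /
        ((m : ℝ) * Real.exp h + (q : ℝ) - m - 1 + θ)) = h ↔
      ((m : ℝ) * Real.exp (h / 2) ^ 2 - (θ - 1) * Real.exp (h / 2) + ((q : ℝ) - m) = 0 ∨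
        Real.exp (h / 2) = 1)) ∧
    (2 * Real.log (((θ + m - 1) * Real.exp h + ((q : ℝ) - m)) /
        ((m : ℝ) * Real.exp h + (q : ℝ) - m - 1 + θ)) = h ↔
      (Real.exp (h / 2) - 1) *
        ((m : ℝ) * Real.exp (h / 2) ^ 2 - (θ - 1) * Real.exp (h / 2) + ((q : ℝ) - m)) = 0) := by
  set x := Real.exp (h / 2) with hxdef
  have hx : 0 < x := Real.exp_pos _
  have hexp : Real.exp h = x ^ 2 := by
    rw [hxdef, sq, ← Real.exp_add]; ring_nf
  have hm' : (1 : ℝ) ≤ (m : ℝ) := by exact_mod_cast hm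
  have hqm : (m : ℝ) + 1 ≤ (q : ℝ) := by
    have : m + 1 ≤ q := by omega
    exact_mod_cast this
  have hN : 0 < (θ + m - 1) * Real.exp h + ((q : ℝ) - m) := by
    rw [hexp]; nlinarith [sq_nonneg x]
  have hD : 0 < (m : ℝ) * Real.exp h + (q : ℝ) - m - 1 + θ := by
    rw [hexp]; nlinarith [sq_nonneg x]
  have key : 2 * Real.log (((θ + m - 1) * Real.exp h + ((q : ℝ) - m)) /
           ((m : ℝ) * Real.exp h + (q : ℝ) - m - 1 + θ)) = h ↔
      (x - 1) * ((m : ℝ) * x ^ 2 - (θ - 1) * x + ((q : ℝ) - m)) = 0 := by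
    have hDiv : 0 < ((θ + m - 1) * Real.exp h + ((q : ℝ) - m)) /
        ((m : ℝ) * Real.exp h + (q : ℝ) - m - 1 + θ) := div_pos hN hD
    constructor
    · intro heq
      have h2 : Real.log (((θ + m - 1) * Real.exp h + ((q : ℝ) - m)) /
          ((m : ℝ) * Real.exp h + (q : ℝ) - m - 1 + θ)) = h / 2 := by linarith
      have h3 : ((θ + m - 1) * Real.exp h + ((q : ℝ) - m)) /
          ((m : ℝ) * Real.exp h + (q : ℝ) - m - 1 + θ) = x := by
        rw [hxdef, ← h2, Real.exp_log hDiv]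
      have h4 : (θ + m - 1) * Real.exp h + ((q : ℝ) - m) =
          x * ((m : ℝ) * Real.exp h + (q : ℝ) - m - 1 + θ) :=
        (div_eq_iff (ne_of_gt hD)).mp h3
      rw [hexp] at h4
      nlinarith [h4]
    · intro heq
      have h4 : (θ + m - 1) * Real.exp h + ((q : ℝ) - m) =
          x * ((m : ℝ) * Real.exp h + (q : ℝ) - m - 1 + θ) := by
        rw [hexp]; nlinarith [heq]
      have h3 : ((θ + m - 1) * Real.exp h + ((q : ℝ) - m)) /
          ((m : ℝ) * Real.exp h + (q : ℝ) - m - 1 + θ) = x :=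
        (div_eq_iff (ne_of_gt hD)).mpr h4
      rw [h3, hxdef, Real.log_exp]; ring
  constructor
  · rw [key, mul_eq_zero, sub_eq_zero]
    tauto
  · exact key
end

section
/- For k=2 and θ > q+1 (so that 1 is between the roots of m x²-(θ-1)x+(q-m)): for any initial vector v ∈ I_m with common value v_1 > 0, the iterates Gⁿ(v) converge to the vector (h_2,...,h_2,0,...,0) (m copies of h_2); if v_1 < 0 they converge to (h_1,...,h_1,0,...,0); and if v_1 = 0 then Gⁿ(v) = 0 for all n. -/
open Real Filter

lemma tendsto_up (f : ℝ → ℝ) (hf : Continuous f) (hmono : Monotone f)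
    (L a : ℝ) (hL : f L = L) (haL : a ≤ L)
    (hsign : ∀ x, a ≤ x → x < L → x < f x) :
    Tendsto (fun n => f^[n] a) atTop (nhds L) := by
  have step : ∀ x, a ≤ x → x ≤ L → x ≤ f x := by
    intro x hax hxL
    rcases lt_or_eq_of_le hxL with h | h
    · exact (hsign x hax h).le
    · subst h; rw [hL]
  have hub : ∀ n, f^[n] a ≤ L := by
    intro n; induction n with
    | zero => simpa
    | succ n ih =>
      rw [Function.iterate_succ_apply']
      calc f (f^[n] a) ≤ f L := hmono ih
        _ = L := hL
  have hlb : ∀ n, a ≤ f^[n] a := by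
    intro n; induction n with
    | zero => simp
    | succ n ih =>
      rw [Function.iterate_succ_apply']
      exact ih.trans (step _ ih (hub n))
  have hmono' : Monotone fun n => f^[n] a := by
    apply monotone_nat_of_le_succ
    intro n
    rw [Function.iterate_succ_apply']
    exact step _ (hlb n) (hub n)
  have hbdd : BddAbove (Set.range fun n => f^[n] a) := ⟨L, by rintro x ⟨n, rfl⟩; exact hub n⟩
  have hT : Tendsto (fun n => f^[n] a) atTop (nhds (⨆ n, f^[n] a)) :=
    tendsto_atTop_ciSup hmono' hbdd
  set L' := ⨆ n, f^[n] a with hL'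
  have hL'le : L' ≤ L := ciSup_le hub
  have haL' : a ≤ L' := by
    have := le_ciSup hbdd 0
    simpa using this
  have hfix : f L' = L' := by
    have h1 : Tendsto (fun n => f (f^[n] a)) atTop (nhds (f L')) :=
      (hf.continuousAt.tendsto).comp hT
    have h2 : Tendsto (fun n => f (f^[n] a)) atTop (nhds L') := by
      have := hT.comp (tendsto_add_atTop_nat 1)
      simpa [Function.comp_def, Function.iterate_succ_apply'] using this
    exact tendsto_nhds_unique h1 h2
  have : L' = L := by
    rcases lt_or_eq_of_le hL'le with h | h
    · exact absurd hfix (by have := hsign L' haL' h; linarith)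
    · exact h
  rwa [this] at hT

lemma tendsto_down (f : ℝ → ℝ) (hf : Continuous f) (hmono : Monotone f)
    (L a : ℝ) (hL : f L = L) (hLa : L ≤ a)
    (hsign : ∀ x, L < x → x ≤ a → f x < x) :
    Tendsto (fun n => f^[n] a) atTop (nhds L) := by
  have step : ∀ x, L ≤ x → x ≤ a → f x ≤ x := by
    intro x hLx hxa
    rcases lt_or_eq_of_le hLx with h | h
    · exact (hsign x h hxa).le
    · rw [← h, hL]
  have hlb : ∀ n, L ≤ f^[n] a := by
    intro n; induction n with
    | zero => simpa
    | succ n ih =>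
      rw [Function.iterate_succ_apply']
      calc L = f L := hL.symm
        _ ≤ f (f^[n] a) := hmono ih
  have hub : ∀ n, f^[n] a ≤ a := by
    intro n; induction n with
    | zero => simp
    | succ n ih =>
      rw [Function.iterate_succ_apply']
      exact (step _ (hlb n) ih).trans ih
  have hanti : Antitone fun n => f^[n] a := by
    apply antitone_nat_of_succ_le
    intro n
    rw [Function.iterate_succ_apply']
    exact step _ (hlb n) (hub n)
  have hbdd : BddBelow (Set.range fun n => f^[n] a) := ⟨L, by rintro x ⟨n, rfl⟩; exact hlb n⟩
  have hT : Tendsto (fun n => f^[n] a) atTop (nhds (⨅ n, f^[n] a)) :=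
    tendsto_atTop_ciInf hanti hbdd
  set L' := ⨅ n, f^[n] a with hL'
  have hL'ge : L ≤ L' := le_ciInf hlb
  have haL' : L' ≤ a := by
    have := ciInf_le hbdd 0
    simpa using this
  have hfix : f L' = L' := by
    have h1 : Tendsto (fun n => f (f^[n] a)) atTop (nhds (f L')) :=
      (hf.continuousAt.tendsto).comp hT
    have h2 : Tendsto (fun n => f (f^[n] a)) atTop (nhds L') := by
      have := hT.comp (tendsto_add_atTop_nat 1)
      simpa [Function.comp_def, Function.iterate_succ_apply'] using this
    exact tendsto_nhds_unique h1 h2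
  have : L' = L := by
    rcases lt_or_eq_of_le hL'ge with h | h
    · exact absurd hfix (by have := hsign L' h haL'; linarith)
    · exact h.symm
  rwa [this] at hT

set_option maxHeartbeats 1000000 in
lemma one_dim (θ q' m' : ℝ) (hm' : 1 ≤ m') (hq2 : 2 * m' ≤ q') (hθ : q' + 1 < θ)
    (f : ℝ → ℝ)
    (hf : f = fun h => 2 * Real.log (((θ + m' - 1) * Real.exp h + (q' - m')) /
      (m' * Real.exp h + (θ + q' - m' - 1))))
    (h₁ h₂ : ℝ)
    (hh₁ : h₁ = 2 * Real.log ((θ - 1 - Real.sqrt ((θ - 1) ^ 2 - 4 * m' * (q' - m'))) / (2 * m')))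
    (hh₂ : h₂ = 2 * Real.log ((θ - 1 + Real.sqrt ((θ - 1) ^ 2 - 4 * m' * (q' - m'))) / (2 * m'))) :
    (∀ h, 0 < h → Tendsto (fun n => f^[n] h) atTop (nhds h₂)) ∧
    (∀ h, h < 0 → Tendsto (fun n => f^[n] h) atTop (nhds h₁)) ∧ f 0 = 0 := by
  have hm0 : (0:ℝ) < m' := by linarith
  have hq0 : (0:ℝ) < q' - m' := by linarith
  set D := (θ - 1) ^ 2 - 4 * m' * (q' - m') with hDdef
  have hD : 0 < D := by nlinarith [sq_nonneg (q' - 2 * m')]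
  set s := Real.sqrt D with hsdef
  have hs0 : 0 < s := Real.sqrt_pos.mpr hD
  have hs2 : s ^ 2 = D := Real.sq_sqrt hD.le
  have hsθ : s < θ - 1 := by nlinarith [sq_nonneg (s - (θ - 1))]
  set x₁ := (θ - 1 - s) / (2 * m') with hx₁def
  set x₂ := (θ - 1 + s) / (2 * m') with hx₂def
  have hx₁0 : 0 < x₁ := div_pos (by linarith) (by linarith)
  have hx₂1 : 1 < x₂ := by
    rw [lt_div_iff₀ (by linarith)]; linarith
  have hx₁1 : x₁ < 1 := by
    rw [div_lt_one (by linarith)]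
    by_contra hcon
    push_neg at hcon
    nlinarith [hs2, hs0]
  have hx₁₂ : x₁ < x₂ := lt_trans hx₁1 hx₂1
  have hsum : m' * (x₁ + x₂) = θ - 1 := by
    rw [hx₁def, hx₂def]; field_simp; ring
  have hprod : m' * (x₁ * x₂) = q' - m' := by
    rw [hx₁def, hx₂def]; field_simp; linear_combination (-1) * hs2
  clear_value x₁ x₂ s D
  have key : ∀ x : ℝ, ((θ + m' - 1) * x ^ 2 + (q' - m')) - x * (m' * x ^ 2 + (θ + q' - m' - 1))
      = -(m' * ((x - 1) * ((x - x₁) * (x - x₂)))) := by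
    intro x
    linear_combination (-(x * (x - 1))) * hsum + (x - 1) * hprod
  have hden : ∀ y : ℝ, 0 < y → 0 < m' * y + (θ + q' - m' - 1) := by
    intro y hy; nlinarith
  have hnum : ∀ y : ℝ, 0 < y → 0 < (θ + m' - 1) * y + (q' - m') := by
    intro y hy; nlinarith
  -- fixed points
  have hexp2 : ∀ x : ℝ, 0 < x → Real.exp (2 * Real.log x) = x ^ 2 := by
    intro x hx
    rw [show 2 * Real.log x = Real.log x + Real.log x by ring, Real.exp_add, Real.exp_log hx]
    ring
  have hfix : ∀ x : ℝ, 0 < x → (x - 1) * ((x - x₁) * (x - x₂)) = 0 →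
      f (2 * Real.log x) = 2 * Real.log x := by
    intro x hx hroot
    rw [hf]; simp only
    rw [hexp2 x hx]
    have heq : (θ + m' - 1) * x ^ 2 + (q' - m') = x * (m' * x ^ 2 + (θ + q' - m' - 1)) := by
      have := key x; rw [hroot] at this; simp at this; linarith
    have hd : 0 < m' * x ^ 2 + (θ + q' - m' - 1) := hden _ (by positivity)
    rw [heq, mul_div_assoc, div_self hd.ne', mul_one]
  have hfix₁ : f h₁ = h₁ := by
    rw [hh₁]
    exact hfix x₁ hx₁0 (by rw [sub_self]; ring)
  have hfix₂ : f h₂ = h₂ := by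
    rw [hh₂]
    exact hfix x₂ (by linarith) (by rw [sub_self]; ring)
  have hfix0 : f 0 = 0 := by
    have := hfix 1 one_pos (by rw [sub_self]; ring)
    simpa using this
  -- monotone
  have hmono : Monotone f := by
    intro h h' hh
    rw [hf]; simp only
    have e1 : Real.exp h ≤ Real.exp h' := Real.exp_le_exp.mpr hh
    have p1 := Real.exp_pos h
    have p2 := Real.exp_pos h'
    have hd1 := hden _ p1
    have hd2 := hden _ p2
    have hn1 := hnum _ p1
    apply mul_le_mul_of_nonneg_left _ (by norm_num : (0:ℝ) ≤ 2)
    apply Real.log_le_log (div_pos hn1 hd1)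
    rw [div_le_div_iff₀ hd1 hd2]
    have h1 : (0:ℝ) ≤ ((θ + m' - 1) * (θ + q' - m' - 1) - (q' - m') * m') * (Real.exp h' - Real.exp h) :=
      mul_nonneg (by nlinarith) (by linarith)
    have h2 : ((θ + m' - 1) * Real.exp h' + (q' - m')) * (m' * Real.exp h + (θ + q' - m' - 1)) -
        ((θ + m' - 1) * Real.exp h + (q' - m')) * (m' * Real.exp h' + (θ + q' - m' - 1)) =
        ((θ + m' - 1) * (θ + q' - m' - 1) - (q' - m') * m') * (Real.exp h' - Real.exp h) := by ring
    linarith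
  -- continuity
  have hcont : Continuous f := by
    rw [hf]
    apply Continuous.mul continuous_const
    apply Continuous.log
    · exact ((continuous_const.mul Real.continuous_exp).add continuous_const).div
        ((continuous_const.mul Real.continuous_exp).add continuous_const)
        (fun x => (hden _ (Real.exp_pos x)).ne')
    · intro x
      exact (div_pos (hnum _ (Real.exp_pos x)) (hden _ (Real.exp_pos x))).ne'
  -- sign comparison helpers
  have hxsq : ∀ h : ℝ, Real.exp h = Real.exp (h / 2) ^ 2 := by
    intro h
    rw [sq, ← Real.exp_add]
    norm_num
  have hltf : ∀ h : ℝ, Real.exp (h / 2) * (m' * Real.exp h + (θ + q' - m' - 1)) <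
      ((θ + m' - 1) * Real.exp h + (q' - m')) → h < f h := by
    intro h hcmp
    rw [hf]; simp only
    have hd := hden _ (Real.exp_pos h)
    have hlog : Real.log (Real.exp (h / 2)) <
        Real.log (((θ + m' - 1) * Real.exp h + (q' - m')) /
          (m' * Real.exp h + (θ + q' - m' - 1))) := by
      apply Real.log_lt_log (Real.exp_pos _)
      rw [lt_div_iff₀ hd]
      exact hcmp
    rw [Real.log_exp] at hlog
    linarith
  have hgtf : ∀ h : ℝ, ((θ + m' - 1) * Real.exp h + (q' - m')) <
      Real.exp (h / 2) * (m' * Real.exp h + (θ + q' - m' - 1)) → f h < h := by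
    intro h hcmp
    rw [hf]; simp only
    have hd := hden _ (Real.exp_pos h)
    have hn := hnum _ (Real.exp_pos h)
    have hlog : Real.log (((θ + m' - 1) * Real.exp h + (q' - m')) /
          (m' * Real.exp h + (θ + q' - m' - 1))) < Real.log (Real.exp (h / 2)) := by
      apply Real.log_lt_log (div_pos hn hd)
      rw [div_lt_iff₀ hd]
      exact hcmp
    rw [Real.log_exp] at hlog
    linarith
  -- correspondence h ↔ x = exp(h/2)
  have hcmp₂ : ∀ h : ℝ, (h < h₂ ↔ Real.exp (h / 2) < x₂) := by
    intro h
    rw [hh₂]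
    constructor
    · intro hh
      have : h / 2 < Real.log x₂ := by linarith
      calc Real.exp (h / 2) < Real.exp (Real.log x₂) := Real.exp_lt_exp.mpr this
        _ = x₂ := Real.exp_log (by linarith)
    · intro hh
      have : h / 2 < Real.log x₂ := by
        rw [← Real.log_exp (h / 2)]
        exact Real.log_lt_log (Real.exp_pos _) hh
      linarith
  have hcmp₁ : ∀ h : ℝ, (h < h₁ ↔ Real.exp (h / 2) < x₁) := by
    intro h
    rw [hh₁]
    constructor
    · intro hh
      have : h / 2 < Real.log x₁ := by linarith
      calc Real.exp (h / 2) < Real.exp (Real.log x₁) := Real.exp_lt_exp.mpr this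
        _ = x₁ := Real.exp_log hx₁0
    · intro hh
      have : h / 2 < Real.log x₁ := by
        rw [← Real.log_exp (h / 2)]
        exact Real.log_lt_log (Real.exp_pos _) hh
      linarith
  have hone : ∀ h : ℝ, 0 < h → 1 < Real.exp (h / 2) := by
    intro h hh
    calc (1:ℝ) = Real.exp 0 := Real.exp_zero.symm
      _ < Real.exp (h / 2) := Real.exp_lt_exp.mpr (by linarith)
  have honelt : ∀ h : ℝ, h < 0 → Real.exp (h / 2) < 1 := by
    intro h hh
    calc Real.exp (h / 2) < Real.exp 0 := Real.exp_lt_exp.mpr (by linarith)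
      _ = 1 := Real.exp_zero
  -- the four sign lemmas
  have S1 : ∀ h, 0 < h → h < h₂ → h < f h := by
    intro h h0 hh
    apply hltf
    have hx := hone h h0
    have hxlt := (hcmp₂ h).mp hh
    have hk := key (Real.exp (h / 2))
    rw [← hxsq h] at hk
    have hP : (0:ℝ) < m' * ((Real.exp (h/2) - 1) * ((Real.exp (h/2) - x₁) * (x₂ - Real.exp (h/2)))) :=
      mul_pos hm0 (mul_pos (by linarith) (mul_pos (by linarith) (by linarith)))
    linarith [hk, hP]
  have S2 : ∀ h, h₂ < h → f h < h := by
    intro h hh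
    apply hgtf
    have hxgt : x₂ < Real.exp (h / 2) := by
      by_contra hcon
      push_neg at hcon
      rcases lt_or_eq_of_le hcon with hlt | heq
      · exact absurd ((hcmp₂ h).mpr hlt) (by linarith)
      · have : h = h₂ := by
          rw [hh₂, ← heq, Real.log_exp]; ring
        linarith
    have hk := key (Real.exp (h / 2))
    rw [← hxsq h] at hk
    have hP : (0:ℝ) < m' * ((Real.exp (h/2) - 1) * ((Real.exp (h/2) - x₁) * (Real.exp (h/2) - x₂))) :=
      mul_pos hm0 (mul_pos (by linarith) (mul_pos (by linarith) (by linarith)))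
    linarith [hk, hP]
  have S3 : ∀ h, h₁ < h → h < 0 → f h < h := by
    intro h hh h0
    apply hgtf
    have hx := honelt h h0
    have hxgt : x₁ < Real.exp (h / 2) := by
      by_contra hcon
      push_neg at hcon
      rcases lt_or_eq_of_le hcon with hlt | heq
      · exact absurd ((hcmp₁ h).mpr hlt) (by linarith)
      · have : h = h₁ := by
          rw [hh₁, ← heq, Real.log_exp]; ring
        linarith
    have hk := key (Real.exp (h / 2))
    rw [← hxsq h] at hk
    have hP : (0:ℝ) < m' * ((1 - Real.exp (h/2)) * ((Real.exp (h/2) - x₁) * (x₂ - Real.exp (h/2)))) :=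
      mul_pos hm0 (mul_pos (by linarith) (mul_pos (by linarith) (by linarith)))
    linarith [hk, hP]
  have S4 : ∀ h, h < h₁ → h < f h := by
    intro h hh
    apply hltf
    have hxlt := (hcmp₁ h).mp hh
    have hk := key (Real.exp (h / 2))
    rw [← hxsq h] at hk
    have hP : (0:ℝ) < m' * ((1 - Real.exp (h/2)) * ((x₁ - Real.exp (h/2)) * (x₂ - Real.exp (h/2)))) :=
      mul_pos hm0 (mul_pos (by linarith) (mul_pos (by linarith) (by linarith)))
    linarith [hk, hP]
  refine ⟨?_, ?_, hfix0⟩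
  · intro h h0
    rcases le_or_gt h h₂ with hle | hlt
    · exact tendsto_up f hcont hmono h₂ h hfix₂ hle (fun x hx hxL => S1 x (lt_of_lt_of_le h0 hx) hxL)
    · exact tendsto_down f hcont hmono h₂ h hfix₂ hlt.le (fun x hLx _ => S2 x hLx)
  · intro h h0
    rcases lt_or_ge h h₁ with hlt | hle
    · exact tendsto_up f hcont hmono h₁ h hfix₁ hlt.le (fun x _ hxL => S4 x hxL)
    · exact tendsto_down f hcont hmono h₁ h hfix₁ hle (fun x hLx hxa => S3 x hLx (lt_of_le_of_lt hxa h0))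



/-- For k=2 and θ > q+1: iterates of G starting from v ∈ I_m converge to the
vector with m copies of h₂ if v₀ > 0, to m copies of h₁ if v₀ < 0, and stay
at 0 if v₀ = 0. -/
theorem G_iterates_limits (θ : ℝ) (q m : ℕ) (hq : 3 ≤ q) (hm : 1 ≤ m)
    (hm2 : m ≤ q / 2) (hθ : (q : ℝ) + 1 < θ)
    (G : (Fin (q - 1) → ℝ) → (Fin (q - 1) → ℝ))
    (hG : G = fun x l =>
      2 * Real.log (((θ - 1) * Real.exp (x l) + (∑ p, Real.exp (x p)) + 1) /
        (θ + ∑ p, Real.exp (x p))))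
    (Im : Set (Fin (q - 1) → ℝ))
    (hIm : Im = {v | (∀ i j : Fin (q - 1), (i : ℕ) < m → (j : ℕ) < m → v i = v j) ∧
      ∀ i : Fin (q - 1), m ≤ (i : ℕ) → v i = 0})
    (h₁ h₂ : ℝ)
    (hh₁ : h₁ =
      2 * Real.log ((θ - 1 - Real.sqrt ((θ - 1) ^ 2 - 4 * m * ((q : ℝ) - m))) / (2 * m)))
    (hh₂ : h₂ =
      2 * Real.log ((θ - 1 + Real.sqrt ((θ - 1) ^ 2 - 4 * m * ((q : ℝ) - m))) / (2 * m)))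
    (v : Fin (q - 1) → ℝ) (hv : v ∈ Im) :
    (0 < v ⟨0, by omega⟩ →
      Filter.Tendsto (fun n => G^[n] v) Filter.atTop
        (nhds (fun l => if (l : ℕ) < m then h₂ else 0))) ∧
    (v ⟨0, by omega⟩ < 0 →
      Filter.Tendsto (fun n => G^[n] v) Filter.atTop
        (nhds (fun l => if (l : ℕ) < m then h₁ else 0))) ∧
    (v ⟨0, by omega⟩ = 0 → ∀ n : ℕ, G^[n] v = 0) := by
  have hm2' : 2 * m ≤ q := by omega
  have hmq1 : m ≤ q - 1 := by omega
  have hm'1 : (1:ℝ) ≤ (m:ℝ) := by exact_mod_cast hm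
  have hq2' : 2 * (m:ℝ) ≤ (q:ℝ) := by exact_mod_cast hm2'
  set f : ℝ → ℝ := fun h => 2 * Real.log (((θ + m - 1) * Real.exp h + ((q:ℝ) - m)) /
      ((m:ℝ) * Real.exp h + (θ + q - m - 1))) with hfdef
  obtain ⟨C₂, C₁, Cf0⟩ := one_dim θ q m hm'1 hq2' hθ f rfl h₁ h₂ hh₁ hh₂
  set vec : ℝ → (Fin (q - 1) → ℝ) := fun h l => if (l : ℕ) < m then h else 0 with hvecdef
  -- sum computation
  have hsumv : ∀ h : ℝ, ∑ p : Fin (q - 1), Real.exp (vec h p)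
      = (m:ℝ) * Real.exp h + ((q:ℝ) - 1 - m) := by
    intro h
    have e1 : ∑ p : Fin (q - 1), Real.exp (vec h p)
        = ∑ i ∈ Finset.range (q - 1), (if i < m then Real.exp h else 1) := by
      rw [← Fin.sum_univ_eq_sum_range (fun i => if i < m then Real.exp h else 1) (q - 1)]
      apply Finset.sum_congr rfl
      intro p _
      simp only [hvecdef, apply_ite Real.exp, Real.exp_zero]
    rw [e1, ← Finset.sum_range_add_sum_Ico _ hmq1]
    have e2 : (∑ i ∈ Finset.range m, if i < m then Real.exp h else 1)
        = (m:ℝ) * Real.exp h := by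
      rw [Finset.sum_ite_of_true]
      · simp [Finset.sum_const, nsmul_eq_mul]
      · intro i hi; exact Finset.mem_range.mp hi
    have e3 : (∑ i ∈ Finset.Ico m (q - 1), if i < m then Real.exp h else 1)
        = ((q:ℝ) - 1 - m) := by
      rw [Finset.sum_ite_of_false]
      · simp only [Finset.sum_const, Nat.card_Ico, nsmul_eq_mul, mul_one]
        have h1 : ((q - 1 : ℕ) : ℝ) = (q:ℝ) - 1 := by
          push_cast [Nat.cast_sub (by omega : 1 ≤ q)]; ring
        rw [Nat.cast_sub hmq1, h1]
      · intro i hi; exact Nat.not_lt.mpr (Finset.mem_Ico.mp hi).1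
    rw [e2, e3]
  -- G maps vec h to vec (f h)
  have hGvec : ∀ h : ℝ, G (vec h) = vec (f h) := by
    intro h
    funext l
    rw [hG]
    simp only
    rw [hsumv h]
    by_cases hl : (l : ℕ) < m
    · have hvl : vec h l = h := by simp [hvecdef, hl]
      rw [hvl]
      have e1 : (θ - 1) * Real.exp h + ((m:ℝ) * Real.exp h + ((q:ℝ) - 1 - m)) + 1
          = (θ + m - 1) * Real.exp h + ((q:ℝ) - m) := by ring
      have e2 : θ + ((m:ℝ) * Real.exp h + ((q:ℝ) - 1 - m))
          = (m:ℝ) * Real.exp h + (θ + q - m - 1) := by ring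
      rw [e1, e2]
      simp [hvecdef, hl, hfdef]
    · have hvl : vec h l = 0 := by simp [hvecdef, hl]
      rw [hvl, Real.exp_zero]
      have hpos : 0 < θ + ((m:ℝ) * Real.exp h + ((q:ℝ) - 1 - m)) := by
        have := Real.exp_pos h
        have h1 : (0:ℝ) ≤ (q:ℝ) - 1 - m := by
          have : ((m:ℕ):ℝ) ≤ ((q-1:ℕ):ℝ) := by exact_mod_cast hmq1
          push_cast [Nat.cast_sub (by omega : 1 ≤ q)] at this
          linarith
        nlinarith
      have e1 : (θ - 1) * 1 + ((m:ℝ) * Real.exp h + ((q:ℝ) - 1 - m)) + 1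
          = θ + ((m:ℝ) * Real.exp h + ((q:ℝ) - 1 - m)) := by ring
      rw [e1, div_self hpos.ne', Real.log_one, mul_zero]
      simp [hvecdef, hl]
  set v0 := v ⟨0, by omega⟩ with hv0def
  have hvvec : v = vec v0 := by
    rw [hIm] at hv
    funext i
    by_cases hi : (i : ℕ) < m
    · have := hv.1 i ⟨0, by omega⟩ hi (by simp; omega)
      simp [hvecdef, hi, this, hv0def]
    · have := hv.2 i (Nat.not_lt.mp hi)
      simp [hvecdef, hi, this]
  have hiter : ∀ n : ℕ, ∀ h : ℝ, G^[n] (vec h) = vec (f^[n] h) := by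
    intro n
    induction n with
    | zero => intro h; rfl
    | succ n ih =>
      intro h
      rw [Function.iterate_succ_apply', Function.iterate_succ_apply', ih, hGvec]
  have hfun : ∀ h : ℝ, (fun n => G^[n] (vec h)) = fun n => vec (f^[n] h) := by
    intro h; funext n; exact hiter n h
  have main : ∀ L : ℝ, Filter.Tendsto (fun n => f^[n] v0) Filter.atTop (nhds L) →
      Filter.Tendsto (fun n => G^[n] v) Filter.atTop
        (nhds (fun l => if (l : ℕ) < m then L else 0)) := by
    intro L hL
    rw [hvvec, hfun]
    rw [tendsto_pi_nhds]
    intro l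
    by_cases hl : (l : ℕ) < m
    · simp only [hvecdef, if_pos hl]
      exact hL
    · simp only [hvecdef, if_neg hl]
      exact tendsto_const_nhds
  refine ⟨fun h0 => main h₂ (C₂ v0 h0), fun h0 => main h₁ (C₁ v0 h0), ?_⟩
  intro h0 n
  have hzero : ∀ k : ℕ, f^[k] v0 = 0 := by
    intro k
    induction k with
    | zero => simpa using h0
    | succ k ih => rw [Function.iterate_succ_apply', ih, Cf0]
  rw [hvvec, hiter n, hzero n]
  funext l
  simp [hvecdef]
end

section
/- For k = 2, q ≥ 3, 1 ≤ m ≤ ⌊q/2⌋ and θ > 1: if θ < θ_m then the equation m x² - (θ-1)x + (q-m) = 0 has no positive real solutions, so 0 is the unique fixed point of f_m; hence if θ < θ_1 = 1+2√(q-1) then for every m with 1 ≤ m ≤ ⌊q/2⌋, 0 is the unique fixed point of f_m. -/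
lemma aux_ufp (θ : ℝ) (q m : ℕ) (hq : 3 ≤ q) (hm : 1 ≤ m) (hm2 : m ≤ q / 2)
    (hθ : 1 < θ) (hθm : θ < 1 + 2 * Real.sqrt ((m : ℝ) * ((q : ℝ) - m))) :
    (∀ x : ℝ, 0 < x → (m : ℝ) * x ^ 2 - (θ - 1) * x + ((q : ℝ) - m) ≠ 0) ∧
    (∀ h : ℝ,
      2 * Real.log (((θ + m - 1) * Real.exp h + ((q : ℝ) - m)) /
        ((m : ℝ) * Real.exp h + (q : ℝ) - m - 1 + θ)) = h ↔ h = 0) := by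
  have h2m : m * 2 ≤ q := (Nat.le_div_iff_mul_le two_pos).mp hm2
  have hm1 : (1:ℝ) ≤ (m:ℝ) := by exact_mod_cast hm
  have hqm : (m:ℝ) ≤ (q:ℝ) - m := by
    have : ((m*2 : ℕ) : ℝ) ≤ (q:ℝ) := by exact_mod_cast h2m
    push_cast at this; linarith
  have hqm1 : (1:ℝ) ≤ (q:ℝ) - m := le_trans hm1 hqm
  have hpos : ∀ x : ℝ, 0 < x → 0 < (m : ℝ) * x ^ 2 - (θ - 1) * x + ((q : ℝ) - m) := by
    intro x hx
    have hs : 0 ≤ (Real.sqrt m * x - Real.sqrt ((q:ℝ) - m)) ^ 2 := sq_nonneg _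
    have h1 : Real.sqrt m ^ 2 = (m:ℝ) := Real.sq_sqrt (by linarith)
    have h2 : Real.sqrt ((q:ℝ) - m) ^ 2 = (q:ℝ) - m := Real.sq_sqrt (by linarith)
    have h3 : Real.sqrt ((m:ℝ) * ((q:ℝ) - m)) = Real.sqrt m * Real.sqrt ((q:ℝ) - m) :=
      Real.sqrt_mul (by linarith) _
    have h4 : 0 < (2 * Real.sqrt ((m:ℝ) * ((q:ℝ) - m)) - (θ - 1)) * x :=
      mul_pos (by linarith) hx
    nlinarith [h4, hs]
  refine ⟨fun x hx => ne_of_gt (hpos x hx), fun h => ?_⟩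
  have hE : 0 < Real.exp h := Real.exp_pos h
  have hN : 0 < (θ + m - 1) * Real.exp h + ((q : ℝ) - m) := by nlinarith
  have hD : 0 < (m : ℝ) * Real.exp h + (q : ℝ) - m - 1 + θ := by nlinarith
  constructor
  · intro hfix
    have hlog : Real.log (((θ + m - 1) * Real.exp h + ((q : ℝ) - m)) /
        ((m : ℝ) * Real.exp h + (q : ℝ) - m - 1 + θ)) = h / 2 := by linarith
    have hdivpos : 0 < ((θ + m - 1) * Real.exp h + ((q : ℝ) - m)) /
        ((m : ℝ) * Real.exp h + (q : ℝ) - m - 1 + θ) := div_pos hN (by linarith)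
    have heq : ((θ + m - 1) * Real.exp h + ((q : ℝ) - m)) /
        ((m : ℝ) * Real.exp h + (q : ℝ) - m - 1 + θ) = Real.exp (h / 2) := by
      rw [← Real.exp_log hdivpos, hlog]
    set x := Real.exp (h / 2) with hxdef
    have hx : 0 < x := Real.exp_pos _
    have hEx : Real.exp h = x ^ 2 := by
      rw [hxdef, sq, ← Real.exp_add]; norm_num
    have heq2 : (θ + m - 1) * Real.exp h + ((q : ℝ) - m) =
        ((m : ℝ) * Real.exp h + (q : ℝ) - m - 1 + θ) * x := by
      field_simp at heq; linarith [heq]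
    rw [hEx] at heq2
    have hfac : (x - 1) * ((m : ℝ) * x ^ 2 - (θ - 1) * x + ((q : ℝ) - m)) = 0 := by
      nlinarith [heq2]
    have hx1 : x = 1 := by
      rcases mul_eq_zero.mp hfac with h1 | h2
      · linarith
      · exact absurd h2 (ne_of_gt (hpos x hx))
    have h2 : h / 2 = 0 := by
      have := congrArg Real.log (hxdef ▸ hx1)
      rwa [Real.log_exp, Real.log_one] at this
    linarith
  · intro h0
    subst h0
    rw [Real.exp_zero]
    have : ((θ + m - 1) * 1 + ((q : ℝ) - m)) /
        ((m : ℝ) * 1 + (q : ℝ) - m - 1 + θ) = 1 := by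
      rw [div_eq_one_iff_eq (by nlinarith)]; ring
    rw [this, Real.log_one]; ring

/-- For k=2, θ > 1: if θ < θ_m then the quadratic has no positive roots and 0
is the unique fixed point of f_m; hence if θ < θ_1 = 1+2√(q-1), then for every
m with 1 ≤ m ≤ ⌊q/2⌋, 0 is the unique fixed point of f_m. -/
theorem unique_fixed_point_small_theta (θ : ℝ) (q m : ℕ) (hq : 3 ≤ q)
    (hm : 1 ≤ m) (hm2 : m ≤ q / 2) (hθ : 1 < θ) :
    (θ < 1 + 2 * Real.sqrt ((m : ℝ) * ((q : ℝ) - m)) →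
      (∀ x : ℝ, 0 < x → (m : ℝ) * x ^ 2 - (θ - 1) * x + ((q : ℝ) - m) ≠ 0) ∧
      (∀ h : ℝ,
        2 * Real.log (((θ + m - 1) * Real.exp h + ((q : ℝ) - m)) /
          ((m : ℝ) * Real.exp h + (q : ℝ) - m - 1 + θ)) = h ↔ h = 0)) ∧
    (θ < 1 + 2 * Real.sqrt ((q : ℝ) - 1) →
      ∀ m' : ℕ, 1 ≤ m' → m' ≤ q / 2 →
        ∀ h : ℝ,
          2 * Real.log (((θ + m' - 1) * Real.exp h + ((q : ℝ) - m')) /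
            ((m' : ℝ) * Real.exp h + (q : ℝ) - m' - 1 + θ)) = h ↔ h = 0) := by
  constructor
  · exact fun hθm => aux_ufp θ q m hq hm hm2 hθ hθm
  · intro hθ1 m' hm'1 hm'2 h
    have h2m : m' * 2 ≤ q := (Nat.le_div_iff_mul_le two_pos).mp hm'2
    have hm1 : (1:ℝ) ≤ (m':ℝ) := by exact_mod_cast hm'1
    have hqm : (m':ℝ) ≤ (q:ℝ) - m' := by
      have : ((m'*2 : ℕ) : ℝ) ≤ (q:ℝ) := by exact_mod_cast h2m
      push_cast at this; linarith
    have hle : (q:ℝ) - 1 ≤ (m':ℝ) * ((q:ℝ) - m') := by nlinarith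
    have hθm : θ < 1 + 2 * Real.sqrt ((m':ℝ) * ((q:ℝ) - m')) :=
      lt_of_lt_of_le hθ1 (by
        have := Real.sqrt_le_sqrt hle
        linarith)
    exact (aux_ufp θ q m' hq hm'1 hm'2 hθ hθm).2 h
end
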